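/- arXiv:1603.09613 — 7 statements merged into one kernel-verified Lean document; each statement's English description precedes it below -/
import Mathlib

section
/- The following three conditions are equivalent: (i) G is bipartite; (ii) every vertex (extreme point) of FRAC(G) lies in ℤ^d; (iii) every vertex (extreme point) of Q(G) lies in ℤ^d. -/
open Set Pointwise

/-- The fractional stable set polytope `FRAC(G)` of a finite simple graph `G` on `Fin d`. -/
def FRAC (d : ℕ) (G : SimpleGraph (Fin d)) : Set (Fin d → ℝ) :=
  {x | (∀ i, 0 ≤ x i) ∧ ∀ i j, G.Adj i j → x i + x j ≤ 1}

/-- The polytope `Q(G) = 3·FRAC(G) − (1,…,1)`. -/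
def Qpoly (d : ℕ) (G : SimpleGraph (Fin d)) : Set (Fin d → ℝ) :=
  {x | (∀ i, -1 ≤ x i) ∧ ∀ i j, G.Adj i j → x i + x j ≤ 1}

/-- The number of lattice points of a subset of `ℝ^d`. -/
noncomputable def latticePts {d : ℕ} (s : Set (Fin d → ℝ)) : ℕ :=
  (s ∩ {x | ∀ i, ∃ z : ℤ, x i = (z : ℝ)}).ncard

/-- `π : Fin d → ℤ` is a signed permutation word on `[d] = {1,…,d}`:
each letter is one of `±1,…,±d` and the absolute values form a permutation of `1,…,d`. -/
def IsSignedPermWord (d : ℕ) (π : Fin d → ℤ) : Prop :=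
  (∀ p, 1 ≤ (π p).natAbs ∧ (π p).natAbs ≤ d) ∧
    Function.Injective fun p => (π p).natAbs

/-- The number of descents of a signed permutation word: position `i` (0-based) is a
descent if `i` is not the last position and `π i > π (i+1)`, or `i` is the last
position and `π i > 0`. -/
noncomputable def des {d : ℕ} (π : Fin d → ℤ) : ℕ :=
  Set.ncard {i : Fin d |
    (∃ h : (i : ℕ) + 1 < d, π ⟨(i : ℕ) + 1, h⟩ < π i) ∨ ((i : ℕ) + 1 = d ∧ 0 < π i)}

/-- Steingrímsson's set `Π(G)`: signed permutation words such that for every edge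
`(i,j)` of `G`, if the letter `+i` appears then the letter `−j` precedes it.
(Vertex `v : Fin d` corresponds to the letter `v+1`.) -/
def PiSet {d : ℕ} (G : SimpleGraph (Fin d)) : Set (Fin d → ℤ) :=
  {π | IsSignedPermWord d π ∧ ∀ i j : Fin d, G.Adj i j →
    ∀ p : Fin d, π p = ((i : ℕ) + 1 : ℤ) →
      ∃ q : Fin d, q < p ∧ π q = -(((j : ℕ) + 1 : ℤ))}

/-- The dual (polar) of a subset of `ℝ^d`. -/
def polarDual {d : ℕ} (P : Set (Fin d → ℝ)) : Set (Fin d → ℝ) :=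
  {x | ∀ y ∈ P, (∑ i, x i * y i) ≤ 1}

/-- The vertex set `{e_i + e_j : (i,j) ∈ E(G)} ∪ {−e_1,…,−e_d}` of the dual of `Q(G)`. -/
def Vset (d : ℕ) (G : SimpleGraph (Fin d)) : Set (Fin d → ℝ) :=
  {x | ∃ i j, G.Adj i j ∧ x = Pi.single i 1 + Pi.single j 1} ∪
    {x | ∃ i, x = -Pi.single i 1}

/-- The Eulerian number `A(k,i)`: the number of permutations of `{1,…,k}` with
exactly `i` descents. -/
noncomputable def eulerianNumber (k i : ℕ) : ℕ :=
  Set.ncard {σ : Equiv.Perm (Fin k) |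
    Set.ncard {j : Fin k | ∃ h : (j : ℕ) + 1 < k, σ ⟨(j : ℕ) + 1, h⟩ < σ j} = i}

/-- The configuration `A ⊂ ℤ^{d+1}` consisting of `(0,1)`, `(e_i+e_j,1)` for edges
`(i,j)`, and `(−e_i,1)`. -/
def Aset (d : ℕ) (G : SimpleGraph (Fin d)) : Set (Fin (d + 1) → ℤ) :=
  {a | a = Fin.snoc (0 : Fin d → ℤ) (1 : ℤ) ∨
    (∃ i j, G.Adj i j ∧ a = Fin.snoc (Pi.single i 1 + Pi.single j 1) (1 : ℤ)) ∨
    ∃ i, a = Fin.snoc (-Pi.single i 1) (1 : ℤ)}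

section Aux
variable {d : ℕ} {G : SimpleGraph (Fin d)}

def Pc (d : ℕ) (G : SimpleGraph (Fin d)) (c : ℝ) : Set (Fin d → ℝ) :=
  {x | (∀ i, c ≤ x i) ∧ ∀ i j, G.Adj i j → x i + x j ≤ 1}

lemma force_le {a b p q m : ℝ} (ha : 0 < a) (hb : 0 < b) (hab : a + b = 1)
    (hp : p ≤ m) (hq : q ≤ m) (h : a * p + b * q = m) : p = m ∧ q = m := by
  have h0 : a * (m - p) + b * (m - q) = 0 := by linear_combination m * hab - h
  have h1 : 0 ≤ a * (m - p) := mul_nonneg ha.le (by linarith)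
  have h2 : 0 ≤ b * (m - q) := mul_nonneg hb.le (by linarith)
  have h3 : a * (m - p) = 0 := by linarith
  have h4 : b * (m - q) = 0 := by linarith
  constructor
  · rcases mul_eq_zero.mp h3 with h | h
    · exact absurd h (ne_of_gt ha)
    · linarith
  · rcases mul_eq_zero.mp h4 with h | h
    · exact absurd h (ne_of_gt hb)
    · linarith

lemma force_ge {a b p q m : ℝ} (ha : 0 < a) (hb : 0 < b) (hab : a + b = 1)
    (hp : m ≤ p) (hq : m ≤ q) (h : a * p + b * q = m) : p = m ∧ q = m := by
  have := force_le (p := -p) (q := -q) (m := -m) ha hb hab (by linarith) (by linarith)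
    (by linarith)
  constructor <;> linarith [this.1, this.2]

lemma fin2_eq (x y : Fin 2) (hx : x ≠ 0) (hy : y ≠ 0) : x = y := by
  fin_cases x <;> fin_cases y <;> simp_all

lemma integral_extreme (c : ℝ) (hcz : ∃ z : ℤ, c = (z : ℝ)) (hcol : G.Colorable 2)
    (v : Fin d → ℝ) (hv : v ∈ Set.extremePoints ℝ (Pc d G c)) (i : Fin d) :
    ∃ z : ℤ, v i = (z : ℝ) := by
  classical
  by_contra hni
  obtain ⟨hvP, hext⟩ := hv
  obtain ⟨col⟩ := hcol
  obtain ⟨cz, hcz⟩ := hcz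
  set S : Finset (Fin d) := Finset.univ.filter (fun j => ¬ ∃ z : ℤ, v j = (z : ℝ)) with hSdef
  have hmemS : ∀ j, j ∈ S ↔ ¬ ∃ z : ℤ, v j = (z : ℝ) := by
    intro j; simp [hSdef]
  have hiS : i ∈ S := (hmemS i).mpr hni
  have hSne : S.Nonempty := ⟨i, hiS⟩
  have hgt : ∀ j ∈ S, c < v j := by
    intro j hj
    rcases lt_or_eq_of_le (hvP.1 j) with h | h
    · exact h
    · exact absurd ⟨cz, by rw [← h, hcz]⟩ ((hmemS j).mp hj)
  have hune : (Finset.univ : Finset (Fin d × Fin d)).Nonempty := ⟨(i,i), Finset.mem_univ _⟩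
  set f : Fin d × Fin d → ℝ := fun p =>
    if G.Adj p.1 p.2 ∧ v p.1 + v p.2 < 1 then 1 - v p.1 - v p.2 else 1 with hfdef
  set ε : ℝ := min (S.inf' hSne (fun j => v j - c)) (Finset.univ.inf' hune f) with hεdef
  have hε : 0 < ε := by
    apply lt_min
    · rw [Finset.lt_inf'_iff]; intro j hj; linarith [hgt j hj]
    · rw [Finset.lt_inf'_iff]; intro p _
      by_cases h : G.Adj p.1 p.2 ∧ v p.1 + v p.2 < 1
      · simp only [hfdef, if_pos h]; linarith [h.2]
      · simp only [hfdef, if_neg h]; norm_num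
  have hεS : ∀ j ∈ S, ε ≤ v j - c := fun j hj =>
    le_trans (min_le_left _ _) (Finset.inf'_le _ hj)
  have hεf : ∀ p : Fin d × Fin d, ε ≤ f p := fun p =>
    le_trans (min_le_right _ _) (Finset.inf'_le _ (Finset.mem_univ p))
  -- slack for mixed edges
  have hslack : ∀ a b : Fin d, G.Adj a b → a ∈ S → b ∉ S → v a + v b < 1 := by
    intro a b hadj haS hbS
    rcases lt_or_eq_of_le (hvP.2 a b hadj) with h | h
    · exact h
    · exfalso
      rw [hmemS, not_not] at hbS
      obtain ⟨z, hz⟩ := hbS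
      exact (hmemS a).mp haS ⟨1 - z, by push_cast; linarith⟩
  set w : Fin d → ℝ := fun j => if j ∈ S then (if col j = 0 then ε else -ε) else 0 with hwdef
  have hw0 : ∀ j, j ∉ S → w j = 0 := by intro j hj; simp [hwdef, hj]
  have hwabs : ∀ j, -ε ≤ w j ∧ w j ≤ ε := by
    intro j
    simp only [hwdef]
    split_ifs <;> constructor <;> linarith
  have hwopp : ∀ a b, G.Adj a b → a ∈ S → b ∈ S → w a + w b = 0 := by
    intro a b hadj ha hb
    have hcol : col a ≠ col b := col.valid hadj
    simp only [hwdef, if_pos ha, if_pos hb]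
    split_ifs with h1 h2 h2
    · exact absurd (h1.trans h2.symm) hcol
    · ring
    · ring
    · exact absurd (fin2_eq _ _ h1 h2) hcol
  -- memberships
  have hmem : ∀ σ : ℝ, σ = 1 ∨ σ = -1 → (fun j => v j + σ * w j) ∈ Pc d G c := by
    intro σ hσ
    have habs : ∀ j, -ε ≤ σ * w j ∧ σ * w j ≤ ε := by
      intro j
      rcases hσ with h | h <;> rw [h] <;> obtain ⟨h1, h2⟩ := hwabs j <;>
        constructor <;> linarith
    refine ⟨fun j => ?_, fun a b hadj => ?_⟩
    · show c ≤ v j + σ * w j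
      by_cases hj : j ∈ S
      · have := hεS j hj
        have := (habs j).1
        linarith
      · rw [hw0 j hj]; simpa using hvP.1 j
    · show v a + σ * w a + (v b + σ * w b) ≤ 1
      by_cases haS : a ∈ S <;> by_cases hbS : b ∈ S
      · have : w a + w b = 0 := hwopp a b hadj haS hbS
        have : σ * w a + σ * w b = 0 := by rw [← mul_add, this, mul_zero]
        have := hvP.2 a b hadj
        linarith
      · have hsl := hslack a b hadj haS hbS
        have hεle : ε ≤ 1 - v a - v b := by
          have := hεf (a, b)
          simpa only [hfdef, if_pos (And.intro hadj hsl)] using this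
        rw [hw0 b hbS]
        have := (habs a).2
        simp only [mul_zero]
        linarith
      · have hsl := hslack b a hadj.symm hbS haS
        have hεle : ε ≤ 1 - v b - v a := by
          have := hεf (b, a)
          simpa only [hfdef, if_pos (And.intro hadj.symm hsl)] using this
        rw [hw0 a haS]
        have := (habs b).2
        simp only [mul_zero]
        linarith
      · rw [hw0 a haS, hw0 b hbS]
        simpa using hvP.2 a b hadj
  have hy := hmem 1 (Or.inl rfl)
  have hz := hmem (-1) (Or.inr rfl)
  have hseg : v ∈ openSegment ℝ (fun j => v j + 1 * w j) (fun j => v j + (-1) * w j) := by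
    refine ⟨1/2, 1/2, by norm_num, by norm_num, by norm_num, ?_⟩
    funext j
    simp only [Pi.add_apply, Pi.smul_apply, smul_eq_mul]
    ring
  have := hext hy hz hseg
  have heq : v i + 1 * w i = v i := congrFun this i
  have hwi : w i ≠ 0 := by
    simp only [hwdef, if_pos hiS]
    split_ifs <;> [exact ne_of_gt hε; exact ne_of_lt (by linarith)]
  apply hwi
  linarith

lemma colorable_of_even_walks (h : ∀ (u : Fin d) (w : G.Walk u u), Even w.length) :
    G.Colorable 2 := by
  classical
  have hre : ∀ v : Fin d, G.Reachable (G.connectedComponentMk v).out v := fun v =>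
    SimpleGraph.ConnectedComponent.eq.mp (Quot.out_eq (G.connectedComponentMk v))
  have hw : ∀ v : Fin d, Nonempty (G.Walk (G.connectedComponentMk v).out v) := fun v => hre v
  let W : ∀ v : Fin d, G.Walk (G.connectedComponentMk v).out v := fun v => (hw v).some
  refine ⟨SimpleGraph.Coloring.mk (fun v => ((W v).length : ZMod 2)) ?_⟩
  intro u v huv heq
  have hcc : G.connectedComponentMk u = G.connectedComponentMk v :=
    SimpleGraph.ConnectedComponent.eq.mpr huv.reachable
  set r := (G.connectedComponentMk u).out with hr
  have hout : (G.connectedComponentMk v).out = r := congrArg _ hcc.symm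
  let q' : G.Walk r v := (W v).copy hout rfl
  have hq' : q'.length = (W v).length := SimpleGraph.Walk.length_copy _ _ _
  let wclosed : G.Walk r r := (W u).append (SimpleGraph.Walk.cons huv q'.reverse)
  have hlen : wclosed.length = (W u).length + ((W v).length + 1) := by
    simp [wclosed, SimpleGraph.Walk.length_append, hq']
  have heven := h r wclosed
  rw [hlen, Nat.even_iff] at heven
  have hmod : ((W u).length : ZMod 2) = ((W v).length : ZMod 2) := heq
  rw [ZMod.natCast_eq_natCast_iff] at hmod
  unfold Nat.ModEq at hmod
  omega

lemma walk_parity (y : Fin d → ℝ) (T : List (Fin d))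
    (H : ∀ a b, G.Adj a b → a ∈ T → b ∈ T → y a + y b = 1) :
    ∀ {s t : Fin d} (p : G.Walk s t), (∀ x ∈ p.support, x ∈ T) →
      (Even p.length → y t = y s) ∧ (¬ Even p.length → y t = 1 - y s) := by
  intro s t p
  induction p with
  | nil => intro _; constructor <;> simp
  | @cons a b t h p ih =>
    intro hsub
    have hb : b ∈ T := hsub b (by
      rw [SimpleGraph.Walk.support_cons]
      exact List.mem_cons_of_mem _ p.start_mem_support)
    have ha : a ∈ T := hsub a (by rw [SimpleGraph.Walk.support_cons]; exact List.mem_cons_self)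
    have hedge := H a b h ha hb
    have hsub' : ∀ x ∈ p.support, x ∈ T := fun x hx => hsub x (by
      rw [SimpleGraph.Walk.support_cons]; exact List.mem_cons_of_mem _ hx)
    obtain ⟨ih1, ih2⟩ := ih hsub'
    rw [SimpleGraph.Walk.length_cons]
    constructor
    · intro he
      rw [Nat.even_add_one] at he
      have := ih2 he
      linarith
    · intro he
      rw [Nat.even_add_one, not_not] at he
      have := ih1 he
      linarith

lemma half_extreme (c : ℝ) (hc : c ≤ 0) {u : Fin d} (w : G.Walk u u) (hodd : ¬ Even w.length) :
    (fun i => if i ∈ w.support then (1/2 : ℝ) else c) ∈ Set.extremePoints ℝ (Pc d G c) := by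
  classical
  set v : Fin d → ℝ := fun i => if i ∈ w.support then (1/2 : ℝ) else c with hvdef
  have hvle : ∀ i, v i ≤ 1/2 := by
    intro i; simp only [hvdef]; split_ifs <;> linarith
  have hvmem : v ∈ Pc d G c := by
    refine ⟨fun i => ?_, fun i j _ => ?_⟩
    · simp only [hvdef]; split_ifs <;> linarith
    · linarith [hvle i, hvle j]
  refine ⟨hvmem, fun y hy z hz hseg => ?_⟩
  obtain ⟨a, b, ha, hb, hab, hsum⟩ := hseg
  have hpt : ∀ i, a * y i + b * z i = v i := by
    intro i
    have := congrFun hsum i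
    simpa [Pi.add_apply, Pi.smul_apply, smul_eq_mul] using this
  -- off-support coordinates are forced to c
  have hoff : ∀ i, i ∉ w.support → y i = c ∧ z i = c := by
    intro i hi
    have hvi : v i = c := by simp [hvdef, hi]
    exact force_ge ha hb hab (hy.1 i) (hz.1 i) (by rw [hpt i, hvi])
  -- edges within support are tight for y and z
  have Hy : ∀ p q : Fin d, G.Adj p q → p ∈ w.support → q ∈ w.support →
      y p + y q = 1 := by
    intro p q hadj hp hq
    have hvp : v p = 1/2 := by simp [hvdef, hp]
    have hvq : v q = 1/2 := by simp [hvdef, hq]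
    have : a * (y p + y q) + b * (z p + z q) = 1 := by
      have h1 := hpt p; have h2 := hpt q
      rw [hvp] at h1; rw [hvq] at h2
      ring_nf
      ring_nf at h1 h2
      linarith
    exact (force_le ha hb hab (hy.2 p q hadj) (hz.2 p q hadj) this).1
  have Hz : ∀ p q : Fin d, G.Adj p q → p ∈ w.support → q ∈ w.support →
      z p + z q = 1 := by
    intro p q hadj hp hq
    have hvp : v p = 1/2 := by simp [hvdef, hp]
    have hvq : v q = 1/2 := by simp [hvdef, hq]
    have : a * (y p + y q) + b * (z p + z q) = 1 := by
      have h1 := hpt p; have h2 := hpt q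
      rw [hvp] at h1; rw [hvq] at h2
      ring_nf
      ring_nf at h1 h2
      linarith
    exact (force_le ha hb hab (hy.2 p q hadj) (hz.2 p q hadj) this).2
  -- all support coordinates of y (and z) are 1/2
  have hhalf : ∀ (f : Fin d → ℝ),
      (∀ p q : Fin d, G.Adj p q → p ∈ w.support → q ∈ w.support → f p + f q = 1) →
      ∀ i ∈ w.support, f i = 1/2 := by
    intro f Hf i hi
    have hclosed := walk_parity f w.support Hf w (fun x hx => hx)
    have hu : f u = 1/2 := by
      have := hclosed.2 hodd
      linarith
    obtain ⟨q, r, rfl⟩ := SimpleGraph.Walk.mem_support_iff_exists_append.mp hi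
    have hqsub : ∀ x ∈ q.support, x ∈ (q.append r).support := by
      intro x hx
      rw [SimpleGraph.Walk.support_append]
      exact List.mem_append_left _ hx
    have hq := walk_parity f (q.append r).support Hf q hqsub
    by_cases he : Even q.length
    · rw [hq.1 he, hu]
    · rw [hq.2 he, hu]; norm_num
  have hyv : y = v := by
    funext i
    by_cases hi : i ∈ w.support
    · rw [hhalf y Hy i hi]; simp [hvdef, hi]
    · rw [(hoff i hi).1]; simp [hvdef, hi]
  have hzv : z = v := by
    funext i
    by_cases hi : i ∈ w.support
    · rw [hhalf z Hz i hi]; simp [hvdef, hi]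
    · rw [(hoff i hi).2]; simp [hvdef, hi]
  exact hyv

end Aux

/-- `G` is bipartite iff `FRAC(G)` is a lattice polytope iff
`Q(G)` is a lattice polytope. -/
theorem stmt5 (d : ℕ) (hd : 1 ≤ d) (G : SimpleGraph (Fin d))
    (hiso : ∀ i : Fin d, ∃ j, G.Adj i j) :
    (G.Colorable 2 ↔
      ∀ v ∈ Set.extremePoints ℝ (FRAC d G), ∀ i, ∃ z : ℤ, v i = (z : ℝ)) ∧
    (G.Colorable 2 ↔
      ∀ v ∈ Set.extremePoints ℝ (Qpoly d G), ∀ i, ∃ z : ℤ, v i = (z : ℝ)) := by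
  classical
  have hkey : ∀ c : ℝ, (∃ z : ℤ, c = (z : ℝ)) → c ≤ 0 →
      (G.Colorable 2 ↔
        ∀ v ∈ Set.extremePoints ℝ (Pc d G c), ∀ i, ∃ z : ℤ, v i = (z : ℝ)) := by
    intro c hcz hc0
    constructor
    · intro hcol v hv i
      exact integral_extreme c hcz hcol v hv i
    · intro hint
      by_contra hcol
      have hodd : ∃ u : Fin d, ∃ w : G.Walk u u, ¬ Even w.length := by
        by_contra hall
        push_neg at hall
        exact hcol (colorable_of_even_walks hall)
      obtain ⟨u, w, hw⟩ := hodd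
      have hv := half_extreme c hc0 w hw
      have h2 := hint _ hv u
      rw [if_pos w.start_mem_support] at h2
      obtain ⟨z, hz⟩ := h2
      have h3 : (2 * z : ℤ) = 1 := by
        have : (2 : ℝ) * z = 1 := by linarith
        exact_mod_cast this
      omega
  have e1 : FRAC d G = Pc d G 0 := rfl
  have e2 : Qpoly d G = Pc d G (-1) := rfl
  rw [e1, e2]
  exact ⟨hkey 0 ⟨0, by norm_num⟩ le_rfl, hkey (-1) ⟨-1, by norm_num⟩ (by norm_num)⟩
end

section
/- The origin of ℝ^d is the unique lattice point belonging to the topological interior of Q(G); that is, (interior of Q(G)) ∩ ℤ^d = {(0,…,0)}. -/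
open Set Pointwise

/-- the origin is the unique lattice point in the interior of `Q(G)`. -/
theorem stmt6 (d : ℕ) (hd : 1 ≤ d) (G : SimpleGraph (Fin d))
    (hiso : ∀ i : Fin d, ∃ j, G.Adj i j) :
    interior (Qpoly d G) ∩ {x : Fin d → ℝ | ∀ i, ∃ z : ℤ, x i = (z : ℝ)} = {0} := by
  ext x
  simp only [Set.mem_inter_iff, Set.mem_setOf_eq, Set.mem_singleton_iff]
  constructor
  · rintro ⟨hx, hz⟩
    obtain ⟨ε, hε, hball⟩ := Metric.mem_nhds_iff.mp (mem_interior_iff_mem_nhds.mp hx)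
    have key : ∀ i : Fin d, -1 < x i ∧ ∀ j, G.Adj i j → x i + x j < 1 := by
      intro i
      constructor
      · have hy : (fun k => if k = i then x k - ε/2 else x k) ∈ Qpoly d G := by
          apply hball
          rw [Metric.mem_ball, dist_pi_lt_iff hε]
          intro k
          by_cases h : k = i
          · subst h
            rw [if_pos rfl, Real.dist_eq]
            have : x k - ε/2 - x k = -(ε/2) := by ring
            rw [this, abs_neg, abs_of_pos (half_pos hε)]
            linarith
          · simp [h, hε]
        have := hy.1 i
        simp at this
        linarith
      · intro j hij
        have hy : (fun k => if k = i then x k + ε/2 else x k) ∈ Qpoly d G := by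
          apply hball
          rw [Metric.mem_ball, dist_pi_lt_iff hε]
          intro k
          by_cases h : k = i
          · subst h
            rw [if_pos rfl, Real.dist_eq]
            have : x k + ε/2 - x k = ε/2 := by ring
            rw [this, abs_of_pos (half_pos hε)]
            linarith
          · simp [h, hε]
        have := hy.2 i j hij
        simp [hij.ne'] at this
        linarith
    funext i
    obtain ⟨j, hij⟩ := hiso i
    obtain ⟨z, hzi⟩ := hz i
    obtain ⟨w, hwj⟩ := hz j
    have h1 : -1 < (z : ℝ) := hzi ▸ (key i).1
    have h2 : -1 < (w : ℝ) := hwj ▸ (key j).1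
    have h3 : (z : ℝ) + w < 1 := by
      have := (key i).2 j hij
      rw [hzi, hwj] at this
      exact this
    have h1' : -1 < z := by exact_mod_cast h1
    have h2' : -1 < w := by exact_mod_cast h2
    have h3' : z + w < 1 := by exact_mod_cast h3
    have : z = 0 := by omega
    simp [hzi, this]
  · rintro rfl
    refine ⟨?_, fun i => ⟨0, by simp⟩⟩
    rw [mem_interior]
    refine ⟨Metric.ball 0 (1/2), ?_, Metric.isOpen_ball, by simp⟩
    intro y hy
    rw [Metric.mem_ball, dist_pi_lt_iff (by norm_num)] at hy
    have habs : ∀ i, |y i| < 1/2 := by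
      intro i
      have := hy i
      simpa [Real.dist_eq] using this
    constructor
    · intro i
      have := abs_lt.mp (habs i)
      linarith [this.1]
    · intro i j _
      have h1 := abs_lt.mp (habs i)
      have h2 := abs_lt.mp (habs j)
      linarith [h1.2, h2.2]
end

section
/- The dual polytope Q(G)^∨ = {x ∈ ℝ^d : ⟨x,y⟩ ≤ 1 for all y ∈ Q(G)} equals the convex hull of the finite set V = {e_i + e_j : (i,j) ∈ E(G)} ∪ {−e_1, …, −e_d}, and V is exactly the set of vertices (extreme points) of Q(G)^∨. In particular, Q(G)^∨ is a lattice polytope. -/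
open Set Pointwise

section Helpers
variable {d : ℕ}


lemma dot_ss (i a : Fin d) : ∑ k, (Pi.single i 1 : Fin d → ℝ) k * (Pi.single a 1 : Fin d → ℝ) k = if i = a then 1 else 0 := by
  rcases eq_or_ne i a with h | h
  · subst h; simp [Pi.single_apply]
  · simp only [Pi.single_apply]
    rw [Finset.sum_eq_zero, if_neg h]
    intro k _
    rcases eq_or_ne k i with rfl | hk
    · simp [h]
    · simp [hk]

lemma dot_add_right (c x y : Fin d → ℝ) :
    ∑ k, c k * (x + y) k = ∑ k, c k * x k + ∑ k, c k * y k := by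
  simp [Pi.add_apply, mul_add, Finset.sum_add_distrib]

lemma dot_add_left (c x y : Fin d → ℝ) :
    ∑ k, (x + y) k * c k = ∑ k, x k * c k + ∑ k, y k * c k := by
  simp [Pi.add_apply, add_mul, Finset.sum_add_distrib]

lemma dot_neg_left (c x : Fin d → ℝ) : ∑ k, (-x) k * c k = -∑ k, x k * c k := by
  simp [neg_mul]

lemma dot_neg_right (c x : Fin d → ℝ) : ∑ k, c k * (-x) k = -∑ k, c k * x k := by
  simp [mul_neg]

lemma single_dot (i : Fin d) (y : Fin d → ℝ) : ∑ k, (Pi.single i 1 : Fin d → ℝ) k * y k = y i := by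
  simp [Pi.single_apply, ite_mul]

lemma dot_single (i : Fin d) (y : Fin d → ℝ) : ∑ k, y k * (Pi.single i 1 : Fin d → ℝ) k = y i := by
  simp [Pi.single_apply, mul_ite]

lemma dot_smul_add (c x y : Fin d → ℝ) (a b : ℝ) :
    ∑ k, c k * (a • x + b • y) k = a * ∑ k, c k * x k + b * ∑ k, c k * y k := by
  simp only [Pi.add_apply, Pi.smul_apply, smul_eq_mul, Finset.mul_sum]
  rw [← Finset.sum_add_distrib]
  exact Finset.sum_congr rfl fun k _ => by ring

lemma smul_add_dot (c x y : Fin d → ℝ) (a b : ℝ) :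
    ∑ k, (a • x + b • y) k * c k = a * ∑ k, x k * c k + b * ∑ k, y k * c k := by
  simp only [Pi.add_apply, Pi.smul_apply, smul_eq_mul, Finset.mul_sum]
  rw [← Finset.sum_add_distrib]
  exact Finset.sum_congr rfl fun k _ => by ring

lemma convex_halfspace_dot (c : Fin d → ℝ) (M : ℝ) :
    Convex ℝ {x : Fin d → ℝ | ∑ k, c k * x k ≤ M} := by
  intro x hx y hy a b ha hb hab
  simp only [mem_setOf_eq] at *
  rw [dot_smul_add]
  calc a * ∑ k, c k * x k + b * ∑ k, c k * y k
      ≤ a * M + b * M :=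
        add_le_add (mul_le_mul_of_nonneg_left hx ha) (mul_le_mul_of_nonneg_left hy hb)
    _ = M := by rw [← add_mul, hab, one_mul]



lemma key_extreme {S : Set (Fin d → ℝ)} (hS : S.Finite) {v : Fin d → ℝ} (hv : v ∈ S)
    (c : Fin d → ℝ)
    (hle : ∀ w ∈ S, ∑ k, c k * w k ≤ ∑ k, c k * v k)
    (heq : ∀ w ∈ S, (∑ k, c k * w k) = (∑ k, c k * v k) → w = v) :
    v ∈ Set.extremePoints ℝ (convexHull ℝ S) := by
  set M := ∑ k, c k * v k with hM
  have hbound : ∀ x ∈ convexHull ℝ S, ∑ k, c k * x k ≤ M :=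
    fun x hx => convexHull_min hle (convex_halfspace_dot c M) hx
  have hface : ∀ x ∈ convexHull ℝ S, (∑ k, c k * x k) = M → x = v := by
    intro x hx hxM
    rw [← hS.coe_toFinset, Finset.mem_convexHull'] at hx
    obtain ⟨w, hw0, hw1, hwx⟩ := hx
    set F := hS.toFinset with hF
    have hdot : ∑ k, c k * x k = ∑ y ∈ F, w y * ∑ k, c k * y k := by
      calc ∑ k, c k * x k = ∑ k, ∑ y ∈ F, c k * (w y * y k) := by
            refine Finset.sum_congr rfl fun k _ => ?_
            rw [← hwx, Finset.sum_apply, Finset.mul_sum]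
            rfl
        _ = ∑ y ∈ F, ∑ k, c k * (w y * y k) := Finset.sum_comm
        _ = ∑ y ∈ F, w y * ∑ k, c k * y k := by
            refine Finset.sum_congr rfl fun y _ => ?_
            rw [Finset.mul_sum]
            exact Finset.sum_congr rfl fun k _ => by ring
    have hterm : ∀ y ∈ F, w y * (∑ k, c k * y k) ≤ w y * M :=
      fun y hy => mul_le_mul_of_nonneg_left (hle y (hS.mem_toFinset.1 hy)) (hw0 y hy)
    have hsumeq : ∑ y ∈ F, w y * (∑ k, c k * y k) = ∑ y ∈ F, w y * M := by
      rw [← hdot, hxM, ← Finset.sum_mul, hw1, one_mul]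
    have hall := (Finset.sum_eq_sum_iff_of_le hterm).1 hsumeq
    have hzero : ∀ y ∈ F, y ≠ v → w y = 0 := by
      intro y hy hyv
      by_contra hwy
      have h1 : (∑ k, c k * y k) = M := mul_left_cancel₀ hwy (hall y hy)
      exact hyv (heq y (hS.mem_toFinset.1 hy) h1)
    have hvF : v ∈ F := hS.mem_toFinset.2 hv
    have hx1 : x = w v • v := by
      rw [← hwx]
      rw [Finset.sum_eq_single v (fun y hy hyv => by rw [hzero y hy hyv, zero_smul])
        (fun h => absurd hvF h)]
    have hwv : w v = 1 := by
      rw [← hw1, Finset.sum_eq_single v (fun y hy hyv => hzero y hy hyv)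
        (fun h => absurd hvF h)]
    rw [hx1, hwv, one_smul]
  rw [mem_extremePoints]
  refine ⟨subset_convexHull ℝ S hv, ?_⟩
  intro x1 hx1 x2 hx2 hseg
  obtain ⟨a, b, ha, hb, hab, hsum⟩ := hseg
  have h1 := hbound x1 hx1
  have h2 := hbound x2 hx2
  have hvdot : a * (∑ k, c k * x1 k) + b * (∑ k, c k * x2 k) = M := by
    rw [← dot_smul_add, hsum]
  have hM' : a * M + b * M = M := by rw [← add_mul, hab, one_mul]
  have e1 : (∑ k, c k * x1 k) = M := by
    have hb2 : b * (∑ k, c k * x2 k) ≤ b * M := mul_le_mul_of_nonneg_left h2 hb.le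
    have : a * M ≤ a * (∑ k, c k * x1 k) := by linarith
    exact le_antisymm h1 (le_of_mul_le_mul_left this ha)
  have e2 : (∑ k, c k * x2 k) = M := by
    have ha2 : a * (∑ k, c k * x1 k) ≤ a * M := mul_le_mul_of_nonneg_left h1 ha.le
    have : b * M ≤ b * (∑ k, c k * x2 k) := by linarith
    exact le_antisymm h2 (le_of_mul_le_mul_left this hb)
  exact ⟨hface x1 hx1 e1, hface x2 hx2 e2⟩


lemma ite_pair_le (i a b : Fin d) (hab : a ≠ b) :
    (if i = a then (1:ℝ) else 0) + (if i = b then 1 else 0) ≤ 1 := by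
  split_ifs with h1 h2
  · exact absurd (h1.symm.trans h2) hab
  all_goals norm_num

end Helpers


lemma Vset_finite (d : ℕ) (G : SimpleGraph (Fin d)) : (Vset d G).Finite := by
  apply Set.Finite.union
  · apply Set.Finite.subset (Set.finite_range
      (fun p : Fin d × Fin d => (Pi.single p.1 1 + Pi.single p.2 1 : Fin d → ℝ)))
    rintro x ⟨i, j, _, rfl⟩
    exact ⟨(i, j), rfl⟩
  · apply Set.Finite.subset (Set.finite_range (fun i : Fin d => (-Pi.single i 1 : Fin d → ℝ)))
    rintro x ⟨i, rfl⟩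
    exact ⟨i, rfl⟩

/-- `Q(G)^∨` is the convex hull of
`V = {e_i+e_j : (i,j) ∈ E(G)} ∪ {−e_i}`, whose vertex set is exactly `V`;
in particular `Q(G)^∨` is a lattice polytope. -/
theorem stmt7 (d : ℕ) (hd : 1 ≤ d) (G : SimpleGraph (Fin d))
    (hiso : ∀ i : Fin d, ∃ j, G.Adj i j) :
    polarDual (Qpoly d G) = convexHull ℝ (Vset d G) ∧
    Set.extremePoints ℝ (polarDual (Qpoly d G)) = Vset d G ∧
    ∀ v ∈ Set.extremePoints ℝ (polarDual (Qpoly d G)), ∀ i, ∃ z : ℤ, v i = (z : ℝ) := by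
  have hVfin := Vset_finite d G
  -- 0 is in the convex hull of V
  obtain ⟨j0, hadj0⟩ := hiso ⟨0, hd⟩
  set i0 : Fin d := ⟨0, hd⟩ with hi0
  have hp1 : (Pi.single i0 1 + Pi.single j0 1 : Fin d → ℝ) ∈ Vset d G :=
    Or.inl ⟨i0, j0, hadj0, rfl⟩
  have hp2 : (-Pi.single i0 1 : Fin d → ℝ) ∈ Vset d G := Or.inr ⟨i0, rfl⟩
  have hp3 : (-Pi.single j0 1 : Fin d → ℝ) ∈ Vset d G := Or.inr ⟨j0, rfl⟩
  have hcx : Convex ℝ (convexHull ℝ (Vset d G)) := convex_convexHull ℝ _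
  have hm : ((1:ℝ)/2) • (-Pi.single i0 1 : Fin d → ℝ) + ((1:ℝ)/2) • (-Pi.single j0 1 : Fin d → ℝ)
      ∈ convexHull ℝ (Vset d G) :=
    hcx (subset_convexHull _ _ hp2) (subset_convexHull _ _ hp3)
      (by norm_num) (by norm_num) (by norm_num)
  have h0 : (0 : Fin d → ℝ) ∈ convexHull ℝ (Vset d G) := by
    have hmem := hcx (subset_convexHull _ _ hp1) hm
      (by norm_num : (0:ℝ) ≤ 1/3) (by norm_num : (0:ℝ) ≤ 2/3) (by norm_num)
    have hcombo : ((1:ℝ)/3) • (Pi.single i0 1 + Pi.single j0 1 : Fin d → ℝ) +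
        ((2:ℝ)/3) • (((1:ℝ)/2) • (-Pi.single i0 1 : Fin d → ℝ) +
          ((1:ℝ)/2) • (-Pi.single j0 1 : Fin d → ℝ)) = 0 := by
      funext k
      simp only [Pi.add_apply, Pi.smul_apply, Pi.neg_apply, smul_eq_mul, Pi.zero_apply,
        Pi.single_apply]
      split_ifs <;> ring
    rwa [hcombo] at hmem
  -- V ⊆ dual
  have hVsub : Vset d G ⊆ polarDual (Qpoly d G) := by
    rintro x (⟨i, j, hij, rfl⟩ | ⟨i, rfl⟩) <;> rintro y ⟨hy1, hy2⟩
    · rw [dot_add_left, single_dot, single_dot]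
      exact hy2 i j hij
    · rw [dot_neg_left, single_dot]
      linarith [hy1 i]
  -- dual is convex
  have hdualconv : Convex ℝ (polarDual (Qpoly d G)) := by
    intro x1 h1 x2 h2 a b ha hb hab y hy
    rw [smul_add_dot]
    calc a * ∑ k, x1 k * y k + b * ∑ k, x2 k * y k ≤ a * 1 + b * 1 :=
          add_le_add (mul_le_mul_of_nonneg_left (h1 y hy) ha)
            (mul_le_mul_of_nonneg_left (h2 y hy) hb)
      _ = 1 := by rw [mul_one, mul_one, hab]
  -- dual ⊆ convex hull of V, via separation
  have hsub : polarDual (Qpoly d G) ⊆ convexHull ℝ (Vset d G) := by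
    intro x hx
    by_contra hxn
    obtain ⟨f, u, hfu, hux⟩ := geometric_hahn_banach_closed_point
      (convex_convexHull ℝ _) (hVfin.isClosed_convexHull (𝕜 := ℝ)) hxn
    have hu0 : 0 < u := by simpa using hfu 0 h0
    set w : Fin d → ℝ := fun i => f (Pi.single i 1) with hw
    have hfeq : ∀ z : Fin d → ℝ, f z = ∑ i, z i * w i := by
      intro z
      have hz : z = ∑ i, (z i) • (Pi.single i 1 : Fin d → ℝ) := by
        conv_lhs => rw [← Finset.univ_sum_single z]
        refine Finset.sum_congr rfl fun i _ => ?_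
        funext k
        simp only [Pi.smul_apply, smul_eq_mul, Pi.single_apply]
        split_ifs <;> simp
      calc f z = f (∑ i, (z i) • (Pi.single i 1 : Fin d → ℝ)) := by rw [← hz]
        _ = ∑ i, f ((z i) • (Pi.single i 1 : Fin d → ℝ)) := map_sum f _ _
        _ = ∑ i, z i * w i := by
            refine Finset.sum_congr rfl fun i _ => ?_
            rw [f.map_smul, smul_eq_mul]
    set y : Fin d → ℝ := u⁻¹ • w with hy
    have hinv : 0 < u⁻¹ := inv_pos.2 hu0
    have hiu : u⁻¹ * u = 1 := inv_mul_cancel₀ (ne_of_gt hu0)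
    have hyQ : y ∈ Qpoly d G := by
      constructor
      · intro i
        have h1 : f (-Pi.single i 1 : Fin d → ℝ) < u :=
          hfu _ (subset_convexHull _ _ (Or.inr ⟨i, rfl⟩))
        have h2 : -w i < u := by rwa [map_neg] at h1
        have : u⁻¹ * (-u) ≤ u⁻¹ * w i := mul_le_mul_of_nonneg_left (by linarith) hinv.le
        have h3 : u⁻¹ * (-u) = -1 := by rw [mul_neg, hiu]
        simpa [hy, h3] using this
      · intro i j hij
        have h1 : f (Pi.single i 1 + Pi.single j 1 : Fin d → ℝ) < u :=
          hfu _ (subset_convexHull _ _ (Or.inl ⟨i, j, hij, rfl⟩))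
        have h2 : w i + w j < u := by rwa [map_add] at h1
        have : u⁻¹ * (w i + w j) ≤ u⁻¹ * u := mul_le_mul_of_nonneg_left h2.le hinv.le
        have h4 : y i + y j = u⁻¹ * (w i + w j) := by simp [hy, mul_add]
        rw [h4, hiu] at *
        linarith
    have hcontr := hx y hyQ
    have hdot : ∑ k, x k * y k = u⁻¹ * f x := by
      rw [hfeq x, Finset.mul_sum]
      refine Finset.sum_congr rfl fun k _ => ?_
      simp [hy]
      ring
    rw [hdot] at hcontr
    have : u⁻¹ * u < u⁻¹ * f x := mul_lt_mul_of_pos_left hux hinv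
    rw [hiu] at this
    linarith
  have h1 : polarDual (Qpoly d G) = convexHull ℝ (Vset d G) :=
    Set.Subset.antisymm hsub (convexHull_min hVsub hdualconv)
  -- extreme points
  have h2 : Set.extremePoints ℝ (polarDual (Qpoly d G)) = Vset d G := by
    rw [h1]
    apply Set.Subset.antisymm extremePoints_convexHull_subset
    rintro v (⟨i, j, hij, rfl⟩ | ⟨i, rfl⟩)
    · -- edge vertex
      have hine : i ≠ j := hij.ne
      have hMv : ∑ k, (Pi.single i 1 + Pi.single j 1 : Fin d → ℝ) k *
          (Pi.single i 1 + Pi.single j 1 : Fin d → ℝ) k = 2 := by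
        rw [dot_add_left, dot_add_right, dot_add_right, dot_ss, dot_ss, dot_ss, dot_ss]
        simp only [if_neg hine, if_neg hine.symm, if_pos rfl]
        norm_num
      apply key_extreme hVfin (Or.inl ⟨i, j, hij, rfl⟩)
        (Pi.single i 1 + Pi.single j 1 : Fin d → ℝ)
      · rintro x (⟨a, b, hab, rfl⟩ | ⟨a, rfl⟩)
        · rw [hMv, dot_add_left, dot_add_right, dot_add_right, dot_ss, dot_ss, dot_ss, dot_ss]
          have h1 := ite_pair_le i a b hab.ne
          have h2 := ite_pair_le j a b hab.ne
          linarith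
        · rw [hMv, dot_neg_right, dot_add_left, dot_ss, dot_ss]
          split_ifs <;> norm_num
      · rintro x (⟨a, b, hab, rfl⟩ | ⟨a, rfl⟩) hval
        · rw [hMv, dot_add_left, dot_add_right, dot_add_right, dot_ss, dot_ss, dot_ss, dot_ss]
            at hval
          have h1 : ¬(i = a ∧ i = b) := fun ⟨h1, h2⟩ => hab.ne (h1 ▸ h2 ▸ rfl)
          have h2 : ¬(j = a ∧ j = b) := fun ⟨h1, h2⟩ => hab.ne (h1 ▸ h2 ▸ rfl)
          split_ifs at hval with hia hib hja hjb <;> norm_num at hval <;>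
            subst_vars <;>
            first
              | rfl
              | exact add_comm _ _
              | exact (G.loopless.irrefl _ hab).elim
              | exact (hine rfl).elim
        · rw [hMv, dot_neg_right, dot_add_left, dot_ss, dot_ss] at hval
          exfalso
          split_ifs at hval <;> norm_num at hval
    · -- negative vertex
      have hMv : ∑ k, (-Pi.single i 1 : Fin d → ℝ) k * (-Pi.single i 1 : Fin d → ℝ) k = 1 := by
        rw [dot_neg_left, dot_neg_right, dot_ss]
        simp
      apply key_extreme hVfin (Or.inr ⟨i, rfl⟩) (-Pi.single i 1 : Fin d → ℝ)
      · rintro x (⟨a, b, hab, rfl⟩ | ⟨a, rfl⟩)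
        · rw [hMv, dot_neg_left, dot_add_right, dot_ss, dot_ss]
          split_ifs <;> norm_num
        · rw [hMv, dot_neg_left, dot_neg_right, dot_ss]
          split_ifs <;> norm_num
      · rintro x (⟨a, b, hab, rfl⟩ | ⟨a, rfl⟩) hval
        · rw [hMv, dot_neg_left, dot_add_right, dot_ss, dot_ss] at hval
          exfalso
          split_ifs at hval <;> norm_num at hval
        · rw [hMv, dot_neg_left, dot_neg_right, dot_ss] at hval
          split_ifs at hval with hia
          · rw [hia]
          · norm_num at hval
  refine ⟨h1, h2, ?_⟩
  intro v hv i
  rw [h2] at hv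
  rcases hv with ⟨a, b, _, rfl⟩ | ⟨a, rfl⟩
  · refine ⟨(if i = a then 1 else 0) + (if i = b then 1 else 0), ?_⟩
    simp only [Pi.add_apply, Pi.single_apply]
    split_ifs <;> norm_num
  · refine ⟨if i = a then -1 else 0, ?_⟩
    simp only [Pi.neg_apply, Pi.single_apply]
    split_ifs <;> norm_num
end

section
/- Let D = conv({e_i + e_j : (i,j) ∈ E(G)} ∪ {−e_1, …, −e_d}) ⊆ ℝ^d (which equals the dual polytope Q(G)^∨). Then D is a Gorenstein Fano polytope — that is, the dual polytope D^∨ is a lattice polytope — if and only if G is bipartite. -/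
open Set Pointwise

lemma polar_hull {d : ℕ} (S : Set (Fin d → ℝ)) :
    polarDual (convexHull ℝ S) = polarDual S := by
  apply Set.Subset.antisymm
  · intro x hx y hy
    exact hx y (subset_convexHull ℝ S hy)
  · intro x hx y hy
    have hlin : IsLinearMap ℝ (fun y : Fin d → ℝ => ∑ i, x i * y i) := by
      constructor
      · intro a b; simp [mul_add, Finset.sum_add_distrib]
      · intro c a; simp [Finset.mul_sum, mul_comm, mul_assoc, mul_left_comm]
    exact convexHull_min (fun z hz => hx z hz) (convex_halfSpace_le hlin 1) hy

lemma sum_single {d : ℕ} (x : Fin d → ℝ) (i : Fin d) :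
    (∑ i', x i' * (Pi.single i 1 : Fin d → ℝ) i') = x i := by
  simp [Pi.single_apply, mul_ite, Finset.sum_ite_eq']

lemma sum_neg_single {d : ℕ} (x : Fin d → ℝ) (i : Fin d) :
    (∑ i', x i' * (-Pi.single i 1 : Fin d → ℝ) i') = -x i := by
  simp [Pi.single_apply, mul_ite, Finset.sum_ite_eq']

lemma polar_V {d : ℕ} (G : SimpleGraph (Fin d)) :
    polarDual (Vset d G) = Qpoly d G := by
  ext x
  constructor
  · intro hx
    constructor
    · intro i
      have := hx (-Pi.single i 1) (Or.inr ⟨i, rfl⟩)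
      rw [sum_neg_single] at this
      linarith
    · intro i j hij
      have := hx (Pi.single i 1 + Pi.single j 1) (Or.inl ⟨i, j, hij, rfl⟩)
      simpa only [Pi.add_apply, mul_add, Finset.sum_add_distrib, sum_single] using this
  · rintro ⟨h1, h2⟩ y (⟨i, j, hij, rfl⟩ | ⟨i, rfl⟩)
    · simp only [Pi.add_apply, mul_add, Finset.sum_add_distrib, sum_single]
      exact h2 i j hij
    · rw [sum_neg_single]
      linarith [h1 i]

open Classical in
lemma bip_int {d : ℕ} (hd : 1 ≤ d) (G : SimpleGraph (Fin d)) (c : G.Coloring (Fin 2))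
    (v : Fin d → ℝ) (hv : v ∈ Set.extremePoints ℝ (Qpoly d G)) :
    ∀ i, ∃ z : ℤ, v i = (z : ℝ) := by
  obtain ⟨hvQ, hext⟩ := hv
  obtain ⟨hlb, hub⟩ := hvQ
  by_contra hcon
  push_neg at hcon
  obtain ⟨i₀, hi₀⟩ := hcon
  have hne : (Finset.univ : Finset (Fin d)).Nonempty := ⟨⟨0, hd⟩, Finset.mem_univ _⟩
  have hne2 : (Finset.univ : Finset (Fin d × Fin d)).Nonempty :=
    ⟨(⟨0, hd⟩, ⟨0, hd⟩), Finset.mem_univ _⟩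
  set Frac : Fin d → Prop := fun i => ¬∃ z : ℤ, v i = (z : ℝ) with hFrac
  set f : Fin d → ℝ := fun i => if Frac i then v i + 1 else 1 with hf
  set g : Fin d × Fin d → ℝ :=
    fun p => if G.Adj p.1 p.2 ∧ ¬(Frac p.1 ↔ Frac p.2) then 1 - (v p.1 + v p.2) else 1 with hg
  set ε : ℝ := min (Finset.univ.inf' hne f) (Finset.univ.inf' hne2 g) with hε
  -- positivity
  have hfpos : ∀ i, 0 < f i := by
    intro i
    simp only [hf]
    split_ifs with h
    · have h1 : v i ≠ -1 := fun hh => h ⟨-1, by simpa using hh⟩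
      have := hlb i
      cases lt_or_eq_of_le this with
      | inl h2 => linarith
      | inr h2 => exact absurd h2.symm h1
    · norm_num
  have hgpos : ∀ p, 0 < g p := by
    intro p
    simp only [hg]
    split_ifs with h
    · obtain ⟨hadj, hxor⟩ := h
      have hle := hub p.1 p.2 hadj
      rcases lt_or_eq_of_le hle with h2 | h2
      · linarith
      · exfalso
        apply hxor
        constructor
        · intro h1 h3
          obtain ⟨z, hz⟩ := h3
          exact h1 ⟨1 - z, by push_cast; linarith⟩
        · intro h1 h3
          obtain ⟨z, hz⟩ := h3
          exact h1 ⟨1 - z, by push_cast; linarith⟩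
    · norm_num
  have hεpos : 0 < ε := by
    apply lt_min
    · exact (Finset.lt_inf'_iff hne).2 fun i _ => hfpos i
    · exact (Finset.lt_inf'_iff hne2).2 fun p _ => hgpos p
  have hεf : ∀ i, ε ≤ f i := fun i => le_trans (min_le_left _ _) (Finset.inf'_le f (Finset.mem_univ i))
  have hεg : ∀ p, ε ≤ g p := fun p => le_trans (min_le_right _ _) (Finset.inf'_le g (Finset.mem_univ p))
  set s : Fin d → ℝ := fun i => if Frac i then (if c i = 0 then ε else -ε) else 0 with hs
  have hsabs : ∀ i, |s i| ≤ ε := by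
    intro i
    simp only [hs]
    split_ifs <;> simp [abs_of_pos hεpos, abs_of_neg, hεpos.le, abs_neg]
  have fin2 : ∀ a : Fin 2, a = 0 ∨ a = 1 := by decide
  -- membership of v ± s
  have key : ∀ σ : ℝ, |σ| = 1 → v + σ • s ∈ Qpoly d G := by
    intro σ hσ
    constructor
    · intro i
      simp only [Pi.add_apply, Pi.smul_apply, smul_eq_mul]
      have h1 : |σ * s i| ≤ ε := by
        rw [abs_mul, hσ, one_mul]; exact hsabs i
      have h2 : -ε ≤ σ * s i := (abs_le.mp h1).1
      by_cases hFi : Frac i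
      · have : ε ≤ v i + 1 := by have := hεf i; simp only [hf, if_pos hFi] at this; exact this
        linarith
      · have : s i = 0 := by simp only [hs, if_neg hFi]
        rw [this]; have := hlb i; simp; linarith
    · intro i j hij
      simp only [Pi.add_apply, Pi.smul_apply, smul_eq_mul]
      by_cases hFi : Frac i <;> by_cases hFj : Frac j
      · -- both fractional: colors differ, s i + s j = 0
        have hc : c i ≠ c j := c.valid hij
        have hsum : s i + s j = 0 := by
          simp only [hs, if_pos hFi, if_pos hFj]
          rcases fin2 (c i) with h1 | h1 <;> rcases fin2 (c j) with h2 | h2 <;>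
            simp [h1, h2] at hc ⊢
        have h0 : σ * s i + σ * s j = 0 := by rw [← mul_add, hsum, mul_zero]
        have := hub i j hij
        linarith
      · -- mixed
        have hε2 : ε ≤ 1 - (v i + v j) := by
          have := hεg (i, j)
          simp only [hg, if_pos (⟨hij, by tauto⟩ : G.Adj i j ∧ ¬(Frac i ↔ Frac j))] at this
          exact this
        have h1 : |σ * s i + σ * s j| ≤ ε := by
          have hj0 : s j = 0 := by simp only [hs, if_neg hFj]
          rw [hj0, mul_zero, add_zero, abs_mul, hσ, one_mul]; exact hsabs i
        have := (abs_le.mp h1).2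
        linarith
      · have hε2 : ε ≤ 1 - (v i + v j) := by
          have := hεg (i, j)
          simp only [hg, if_pos (⟨hij, by tauto⟩ : G.Adj i j ∧ ¬(Frac i ↔ Frac j))] at this
          exact this
        have h1 : |σ * s i + σ * s j| ≤ ε := by
          have hi0 : s i = 0 := by simp only [hs, if_neg hFi]
          rw [hi0, mul_zero, zero_add, abs_mul, hσ, one_mul]; exact hsabs j
        have := (abs_le.mp h1).2
        linarith
      · have hi0 : s i = 0 := by simp only [hs, if_neg hFi]
        have hj0 : s j = 0 := by simp only [hs, if_neg hFj]
        rw [hi0, hj0]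
        simpa using hub i j hij
  have h1 : v + (1:ℝ) • s ∈ Qpoly d G := key 1 (by norm_num)
  have h2 : v + (-1:ℝ) • s ∈ Qpoly d G := key (-1) (by norm_num)
  have hseg : v ∈ openSegment ℝ (v + (1:ℝ) • s) (v + (-1:ℝ) • s) := by
    refine ⟨1/2, 1/2, by norm_num, by norm_num, by norm_num, ?_⟩
    funext i
    simp only [Pi.add_apply, Pi.smul_apply, smul_eq_mul]
    ring
  have := hext h1 h2 hseg
  have hz : s i₀ = 0 := by
    have h3 : v + (1:ℝ) • s = v := this
    have := congrFun h3 i₀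
    simp at this
    linarith [this]
  have : Frac i₀ := by simp only [hFrac]; push_neg; exact hi₀
  simp only [hs, if_pos this] at hz
  rcases fin2 (c i₀) with h | h <;> simp [h] at hz <;> linarith


open Classical in
lemma odd_closed_walk {d : ℕ} (G : SimpleGraph (Fin d)) (h : ¬G.Colorable 2) :
    ∃ (v : Fin d) (p : G.Walk v v), Odd p.length := by
  by_contra hcon
  push_neg at hcon
  apply h
  -- root of component of i
  have hreach : ∀ i : Fin d, G.Reachable (G.connectedComponentMk i).out i := by
    intro i
    have := (G.connectedComponentMk i).out_eq
    exact (SimpleGraph.ConnectedComponent.eq.mp this)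
  set w : ∀ i : Fin d, G.Walk (G.connectedComponentMk i).out i :=
    fun i => (hreach i).some with hw
  refine ⟨SimpleGraph.Coloring.mk (fun i => if Even (w i).length then 0 else 1) ?_⟩
  intro i j hij
  have hcomp : G.connectedComponentMk i = G.connectedComponentMk j :=
    SimpleGraph.ConnectedComponent.sound hij.reachable
  have hout : (G.connectedComponentMk j).out = (G.connectedComponentMk i).out := by rw [hcomp]
  -- closed walk at out i : w i ++ edge i j ++ reverse (w j)
  set p : G.Walk (G.connectedComponentMk i).out (G.connectedComponentMk i).out :=
    ((w i).concat hij).append ((w j).copy hout rfl).reverse with hp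
  have hlen : p.length = (w i).length + 1 + (w j).length := by
    simp [hp, SimpleGraph.Walk.length_append, SimpleGraph.Walk.length_reverse,
      SimpleGraph.Walk.length_concat, SimpleGraph.Walk.length_copy]
  have heven : Even p.length := by
    have := hcon _ p
    rcases Nat.even_or_odd p.length with h1 | h1
    · exact h1
    · exact absurd h1 this
  rw [hlen] at heven
  intro hcc
  rcases Nat.even_or_odd (w i).length with h1 | h1 <;>
    rcases Nat.even_or_odd (w j).length with h2 | h2
  · rw [Nat.even_iff] at h1 h2 heven; omega
  · simp only [if_pos h1, if_neg (Nat.not_even_iff_odd.mpr h2)] at hcc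
    exact absurd hcc (by decide)
  · simp only [if_neg (Nat.not_even_iff_odd.mpr h1), if_pos h2] at hcc
    exact absurd hcc (by decide)
  · rw [Nat.odd_iff] at h1 h2; rw [Nat.even_iff] at heven; omega

lemma walk_parity_s15 {d : ℕ} (G : SimpleGraph (Fin d)) (v₀ : Fin d) (y : Fin d → ℝ)
    (hy : ∀ i j, G.Adj i j → G.Reachable v₀ i → y i + y j = 1) :
    ∀ (a b : Fin d) (p : G.Walk a b), G.Reachable v₀ a →
      (Even p.length → y b = y a) ∧ (¬Even p.length → y b = 1 - y a) := by
  intro a b p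
  induction p with
  | nil => intro _; exact ⟨fun _ => rfl, fun h => absurd (Even.zero) h⟩
  | cons hadj q ih =>
    rename_i u v' w'
    intro hra
    have hrv : G.Reachable v₀ v' := hra.trans hadj.reachable
    have hstep : y u + y v' = 1 := hy u v' hadj hra
    obtain ⟨ihe, iho⟩ := ih hrv
    rw [SimpleGraph.Walk.length_cons]
    constructor
    · intro he
      have hq : ¬Even q.length := by
        rw [Nat.even_add_one] at he; exact he
      rw [iho hq]; linarith
    · intro ho
      have hq : Even q.length := by
        rw [Nat.even_add_one] at ho; exact not_not.mp ho
      rw [ihe hq]; linarith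

open Classical in
lemma half_extreme_s15 {d : ℕ} (G : SimpleGraph (Fin d)) (v₀ : Fin d)
    (p₀ : G.Walk v₀ v₀) (hodd : Odd p₀.length) :
    ∃ x ∈ Set.extremePoints ℝ (Qpoly d G), x v₀ = 1/2 := by
  set x : Fin d → ℝ := fun i => if G.Reachable v₀ i then 1/2 else -1 with hx
  have hxK : ∀ i, G.Reachable v₀ i → x i = 1/2 := fun i h => by simp [hx, if_pos h]
  have hxN : ∀ i, ¬G.Reachable v₀ i → x i = -1 := fun i h => by simp [hx, if_neg h]
  have hxQ : x ∈ Qpoly d G := by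
    constructor
    · intro i; simp only [hx]; split_ifs <;> norm_num
    · intro i j hij
      by_cases hri : G.Reachable v₀ i
      · have hrj : G.Reachable v₀ j := hri.trans hij.reachable
        rw [hxK i hri, hxK j hrj]; norm_num
      · have hrj : ¬G.Reachable v₀ j := fun h => hri (h.trans hij.symm.reachable)
        rw [hxN i hri, hxN j hrj]; norm_num
  refine ⟨x, ⟨hxQ, ?_⟩, hxK v₀ (SimpleGraph.Reachable.refl v₀)⟩
  rintro y ⟨hylb, hyub⟩ z ⟨hzlb, hzub⟩ ⟨a, b, ha, hb, hab, hseg⟩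
  -- For i not reachable: y i = z i = -1 = x i
  have hnotK : ∀ i, ¬G.Reachable v₀ i → y i = -1 ∧ z i = -1 := by
    intro i hri
    have hxi : x i = -1 := hxN i hri
    have hsi : a * y i + b * z i = x i := by
      have := congrFun hseg i
      simpa using this
    rw [hxi] at hsi
    constructor
    · by_contra hne
      have h1 : -1 < y i := lt_of_le_of_ne (hylb i) (Ne.symm hne)
      nlinarith [hzlb i]
    · by_contra hne
      have h1 : -1 < z i := lt_of_le_of_ne (hzlb i) (Ne.symm hne)
      nlinarith [hylb i]
  -- For edges inside K: tight for y and z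
  have htight : ∀ w : Fin d → ℝ, w ∈ Qpoly d G →
      (∀ i j, G.Adj i j → G.Reachable v₀ i → G.Reachable v₀ j →
        a * y i + b * z i = x i) → True := fun _ _ _ => trivial
  have hedge : ∀ i j, G.Adj i j → G.Reachable v₀ i → (y i + y j = 1 ∧ z i + z j = 1) := by
    intro i j hij hri
    have hrj : G.Reachable v₀ j := hri.trans hij.reachable
    have hxsum : x i + x j = 1 := by rw [hxK i hri, hxK j hrj]; norm_num
    have hs1 : a * y i + b * z i = x i := by simpa using congrFun hseg i
    have hs2 : a * y j + b * z j = x j := by simpa using congrFun hseg j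
    have hyle := hyub i j hij
    have hzle := hzub i j hij
    constructor
    · by_contra hne
      have h1 : y i + y j < 1 := lt_of_le_of_ne hyle hne
      nlinarith
    · by_contra hne
      have h1 : z i + z j < 1 := lt_of_le_of_ne hzle hne
      nlinarith
  -- y and z are 1/2 on K
  have hhalf : ∀ w : Fin d → ℝ, (∀ i j, G.Adj i j → G.Reachable v₀ i → w i + w j = 1) →
      ∀ i, G.Reachable v₀ i → w i = 1/2 := by
    intro w hw i hri
    have hv₀ : w v₀ = 1/2 := by
      have := (walk_parity_s15 G v₀ w hw v₀ v₀ p₀ (SimpleGraph.Reachable.refl v₀)).2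
        (Nat.not_even_iff_odd.mpr hodd)
      linarith
    obtain ⟨q⟩ := hri
    have := walk_parity_s15 G v₀ w hw v₀ i q (SimpleGraph.Reachable.refl v₀)
    rcases Nat.even_or_odd q.length with he | ho
    · rw [this.1 he, hv₀]
    · rw [this.2 (Nat.not_even_iff_odd.mpr ho), hv₀]; norm_num
  suffices hyz : y = x ∧ z = x from hyz.1
  constructor
  · funext i
    by_cases hri : G.Reachable v₀ i
    · rw [hhalf y (fun i j h hr => (hedge i j h hr).1) i hri, hxK i hri]
    · rw [(hnotK i hri).1, hxN i hri]
  · funext i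
    by_cases hri : G.Reachable v₀ i
    · rw [hhalf z (fun i j h hr => (hedge i j h hr).2) i hri, hxK i hri]
    · rw [(hnotK i hri).2, hxN i hri]


/-- `D = conv({e_i+e_j : (i,j) ∈ E(G)} ∪ {−e_i})` is Gorenstein Fano
(i.e. its dual is a lattice polytope) iff `G` is bipartite. -/
theorem stmt15 (d : ℕ) (hd : 1 ≤ d) (G : SimpleGraph (Fin d))
    (hiso : ∀ i : Fin d, ∃ j, G.Adj i j) :
    (∀ v ∈ Set.extremePoints ℝ (polarDual (convexHull ℝ (Vset d G))),
      ∀ i, ∃ z : ℤ, v i = (z : ℝ)) ↔ G.Colorable 2 := by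
  rw [polar_hull, polar_V]
  constructor
  · intro hall
    by_contra hnc
    obtain ⟨v₀, p₀, hodd⟩ := odd_closed_walk G hnc
    obtain ⟨x, hx, hx0⟩ := half_extreme_s15 G v₀ p₀ hodd
    obtain ⟨z, hz⟩ := hall x hx v₀
    rw [hx0] at hz
    have h2 : ((2 * z : ℤ) : ℝ) = ((1 : ℤ) : ℝ) := by push_cast; linarith
    have := Int.cast_injective h2
    omega
  · intro hcol v hv i
    obtain ⟨c⟩ := hcol
    exact bip_int hd G c v hv i
end

section
/- Let D = conv({e_i + e_j : (i,j) ∈ E(G)} ∪ {−e_1, …, −e_d}) ⊆ ℝ^d. Then D is a Fano polytope: D has dimension d, and the origin is the unique lattice point belonging to the topological interior of D. -/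
open Set Pointwise

lemma half_single_mem (d : ℕ) (G : SimpleGraph (Fin d))
    (hiso : ∀ i : Fin d, ∃ j, G.Adj i j) (i : Fin d) :
    (1 / 2 : ℝ) • (Pi.single i 1 : Fin d → ℝ) ∈ convexHull ℝ (Vset d G) := by
  obtain ⟨j, hij⟩ := hiso i
  have h1 : (Pi.single i 1 + Pi.single j 1 : Fin d → ℝ) ∈ convexHull ℝ (Vset d G) :=
    subset_convexHull ℝ _ (Or.inl ⟨i, j, hij, rfl⟩)
  have h2 : (-Pi.single j 1 : Fin d → ℝ) ∈ convexHull ℝ (Vset d G) :=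
    subset_convexHull ℝ _ (Or.inr ⟨j, rfl⟩)
  have := (convex_convexHull ℝ (Vset d G)) h1 h2
    (by norm_num : (0:ℝ) ≤ 1/2) (by norm_num : (0:ℝ) ≤ 1/2) (by norm_num)
  convert this using 1
  module

lemma small_mem (d : ℕ) (hd : 1 ≤ d) (G : SimpleGraph (Fin d))
    (hiso : ∀ i : Fin d, ∃ j, G.Adj i j) (x : Fin d → ℝ)
    (hx : ∑ i, |x i| ≤ 1 / 2) : x ∈ convexHull ℝ (Vset d G) := by
  classical
  set w : Option (Fin d) → ℝ := fun o =>
    Option.elim o (1 - ∑ i, (if 0 ≤ x i then 2 * x i else -x i))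
      (fun i => if 0 ≤ x i then 2 * x i else -x i) with hw
  set z : Option (Fin d) → (Fin d → ℝ) := fun o =>
    Option.elim o 0 (fun i => if 0 ≤ x i then (1/2 : ℝ) • (Pi.single i 1 : Fin d → ℝ) else -Pi.single i 1)
      with hz
  have hvle : ∀ i, (if 0 ≤ x i then 2 * x i else -x i) ≤ 2 * |x i| := by
    intro i
    by_cases h : 0 ≤ x i
    · simp [h, abs_of_nonneg h]
    · push_neg at h
      simp only [if_neg (not_le.2 h), abs_of_neg h]
      linarith
  have hvnn : ∀ i, 0 ≤ (if 0 ≤ x i then 2 * x i else -x i) := by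
    intro i; by_cases h : 0 ≤ x i
    · rw [if_pos h]; linarith
    · rw [if_neg h]; push_neg at h; linarith
  have hsumle : ∑ i, (if 0 ≤ x i then 2 * x i else -x i) ≤ 1 := by
    calc ∑ i, (if 0 ≤ x i then 2 * x i else -x i) ≤ ∑ i, 2 * |x i| :=
          Finset.sum_le_sum fun i _ => hvle i
      _ = 2 * ∑ i, |x i| := by rw [Finset.mul_sum]
      _ ≤ 1 := by linarith
  have h0mem : (0 : Fin d → ℝ) ∈ convexHull ℝ (Vset d G) := by
    obtain ⟨i⟩ : Nonempty (Fin d) := ⟨⟨0, hd⟩⟩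
    have h1 := half_single_mem d G hiso i
    have h2 : (-Pi.single i 1 : Fin d → ℝ) ∈ convexHull ℝ (Vset d G) :=
      subset_convexHull ℝ _ (Or.inr ⟨i, rfl⟩)
    have := (convex_convexHull ℝ (Vset d G)) h1 h2
      (by norm_num : (0:ℝ) ≤ 2/3) (by norm_num : (0:ℝ) ≤ 1/3) (by norm_num)
    convert this using 1
    module
  have key : ∑ o : Option (Fin d), w o • z o ∈ convexHull ℝ (Vset d G) := by
    apply (convex_convexHull ℝ (Vset d G)).sum_mem
    · intro o _
      match o with
      | none => simpa [hw] using by linarith [hsumle]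
      | some i => exact hvnn i
    · rw [Fintype.sum_option]; simp [hw]
    · intro o _
      match o with
      | none => exact h0mem
      | some i =>
        simp only [hz, Option.elim]
        by_cases h : 0 ≤ x i
        · rw [if_pos h]; exact half_single_mem d G hiso i
        · rw [if_neg h]; exact subset_convexHull ℝ _ (Or.inr ⟨i, rfl⟩)
  have hxeq : ∑ o : Option (Fin d), w o • z o = x := by
    rw [Fintype.sum_option]
    simp only [hw, hz, Option.elim, smul_zero, zero_add]
    have : ∀ i : Fin d, (if 0 ≤ x i then 2 * x i else -x i) •
        (if 0 ≤ x i then (1/2 : ℝ) • (Pi.single i 1 : Fin d → ℝ) else -Pi.single i 1)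
        = (Pi.single i (x i) : Fin d → ℝ) := by
      intro i
      by_cases h : 0 ≤ x i
      · rw [if_pos h, if_pos h, smul_smul, show (2 * x i) * (1/2 : ℝ) = x i by ring,
          ← Pi.single_smul, smul_eq_mul, mul_one]
      · rw [if_neg h, if_neg h, smul_neg, ← Pi.single_smul, smul_eq_mul, mul_one]
        rw [show -x i = -(x i) from rfl, Pi.single_neg, neg_neg]
    rw [Finset.sum_congr rfl fun i _ => this i, Finset.univ_sum_single]
  rw [← hxeq]; exact key

lemma ball_subset (d : ℕ) (hd : 1 ≤ d) (G : SimpleGraph (Fin d))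
    (hiso : ∀ i : Fin d, ∃ j, G.Adj i j) :
    Metric.ball (0 : Fin d → ℝ) (1 / (2 * (d + 1))) ⊆ convexHull ℝ (Vset d G) := by
  intro x hx
  rw [Metric.mem_ball, dist_zero_right] at hx
  apply small_mem d hd G hiso
  have h1 : ∀ i, |x i| ≤ ‖x‖ := fun i => by
    simpa using norm_le_pi_norm x i
  calc ∑ i, |x i| ≤ ∑ _i : Fin d, ‖x‖ := Finset.sum_le_sum fun i _ => h1 i
    _ = d * ‖x‖ := by simp [mul_comm]
    _ ≤ d * (1 / (2 * (d + 1))) := by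
        apply mul_le_mul_of_nonneg_left (le_of_lt hx) (by positivity)
    _ ≤ 1 / 2 := by
        rw [mul_one_div, div_le_div_iff₀ (by positivity) (by norm_num)]
        have : (0:ℝ) ≤ (d:ℝ) := Nat.cast_nonneg d
        linarith

lemma cube_subset (d : ℕ) (G : SimpleGraph (Fin d)) :
    convexHull ℝ (Vset d G) ⊆ Set.pi Set.univ (fun _ : Fin d => Set.Icc (-1 : ℝ) 1) := by
  apply convexHull_min
  · rintro x (⟨i, j, hij, rfl⟩ | ⟨i, rfl⟩) k -
    · have hne : i ≠ j := hij.ne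
      simp only [Set.mem_Icc, Pi.add_apply, Pi.single_apply]
      by_cases h1 : k = i
      · subst h1
        rw [if_pos rfl, if_neg hne]
        norm_num
      · rw [if_neg h1]
        by_cases h2 : k = j <;> simp [h2] <;> norm_num
    · simp only [Set.mem_Icc, Pi.neg_apply, Pi.single_apply]
      by_cases h1 : k = i <;> simp [h1] <;> norm_num
  · exact convex_pi fun i _ => convex_Icc _ _

/-- `D = conv({e_i+e_j : (i,j) ∈ E(G)} ∪ {−e_i})` is a Fano polytope:
it is full-dimensional and the origin is its unique interior lattice point. -/
theorem stmt16 (d : ℕ) (hd : 1 ≤ d) (G : SimpleGraph (Fin d))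
    (hiso : ∀ i : Fin d, ∃ j, G.Adj i j) :
    affineSpan ℝ (convexHull ℝ (Vset d G)) = ⊤ ∧
    interior (convexHull ℝ (Vset d G)) ∩
        {x : Fin d → ℝ | ∀ i, ∃ z : ℤ, x i = (z : ℝ)} = {0} := by
  have hball := ball_subset d hd G hiso
  have h0int : (0 : Fin d → ℝ) ∈ interior (convexHull ℝ (Vset d G)) :=
    interior_maximal hball Metric.isOpen_ball (Metric.mem_ball_self (by positivity))
  constructor
  · rw [affineSpan_convexHull]
    exact affineSpan_eq_top_of_nonempty_interior ⟨0, h0int⟩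
  · apply Set.eq_singleton_iff_unique_mem.2
    constructor
    · exact ⟨h0int, fun i => ⟨0, by simp⟩⟩
    · rintro x ⟨hxint, hxlat⟩
      have hx2 : x ∈ interior (Set.pi Set.univ (fun _ : Fin d => Set.Icc (-1 : ℝ) 1)) :=
        interior_mono (cube_subset d G) hxint
      rw [interior_pi_set Set.finite_univ] at hx2
      simp only [interior_Icc] at hx2
      funext i
      obtain ⟨z, hz⟩ := hxlat i
      have := hx2 i (Set.mem_univ i)
      rw [hz] at this ⊢
      obtain ⟨h1, h2⟩ := this
      have hz1 : (-1:ℤ) < z := by exact_mod_cast h1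
      have hz2 : (z:ℤ) < 1 := by exact_mod_cast h2
      have : z = 0 := by omega
      simp [this]
end

section
/- Suppose G contains an odd cycle on the vertices 1, 2, …, 2k+1 (with k ≥ 1), i.e., (i, i+1) ∈ E(G) for 1 ≤ i ≤ 2k and (1, 2k+1) ∈ E(G). Let A ⊂ ℤ^{d+1} consist of (0,…,0,1), the vectors (e_i + e_j, 1) for edges (i,j) ∈ E(G), and the vectors (−e_i, 1) for 1 ≤ i ≤ d, and let u = (1, …, 1, 0, …, 0, k+1) ∈ ℤ^{d+1} be the vector whose first 2k+1 coordinates equal 1, whose next d−(2k+1) coordinates equal 0, and whose last coordinate equals k+1. Then u is a nonnegative rational linear combination of elements of A, but u is not a nonnegative integer linear combination of elements of A. -/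
open Set Pointwise

lemma pairEq {d : ℕ} {v w v' w' : Fin d} (hvw : v ≠ w) (hvw' : v' ≠ w')
    (h : (Pi.single v 1 + Pi.single w 1 : Fin d → ℤ)
       = Pi.single v' 1 + Pi.single w' 1) :
    (v = v' ∧ w = w') ∨ (v = w' ∧ w = v') := by
  have h1 := congrFun h v
  have h2 := congrFun h w
  simp only [Pi.add_apply, Pi.single_apply] at h1 h2
  split_ifs at h1 h2 <;> simp_all

lemma cycsum (k p : ℕ) (hk : 1 ≤ k) :
    (∑ m ∈ Finset.range (2*k+1),
      ((if p = (if m = 2*k then 0 else m) then (1:ℚ) else 0) +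
       (if p = (if m = 2*k then 2*k else m+1) then (1:ℚ) else 0)))
      = if p < 2*k+1 then 2 else 0 := by
  rw [Finset.sum_add_distrib, Finset.sum_range_succ, Finset.sum_range_succ]
  have h1 : ∑ m ∈ Finset.range (2*k), (if p = (if m = 2*k then 0 else m) then (1:ℚ) else 0)
      = if p ∈ Finset.range (2*k) then 1 else 0 := by
    rw [← Finset.sum_ite_eq (Finset.range (2*k)) p (fun _ => (1:ℚ))]
    refine Finset.sum_congr rfl fun m hm => ?_
    simp only [Finset.mem_range] at hm
    rw [show (if m = 2*k then 0 else m) = m from if_neg (by omega)]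
  have h2 : ∑ m ∈ Finset.range (2*k), (if p = (if m = 2*k then 2*k else m+1) then (1:ℚ) else 0)
      = if 1 ≤ p ∧ p ≤ 2*k then 1 else 0 := by
    have e : ∀ m ∈ Finset.range (2*k), (if p = (if m = 2*k then 2*k else m+1) then (1:ℚ) else 0)
        = if p = m + 1 then 1 else 0 := by
      intro m hm; simp only [Finset.mem_range] at hm
      rw [show (if m = 2*k then 2*k else m+1) = m+1 from if_neg (by omega)]
    rw [Finset.sum_congr rfl e]
    rcases p with _ | q
    · simp
    · have e2 : ∀ m ∈ Finset.range (2*k), (if q+1 = m + 1 then (1:ℚ) else 0)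
        = if q = m then 1 else 0 := by
        intro m _; simp [Nat.add_right_cancel_iff]
      rw [Finset.sum_congr rfl e2, Finset.sum_ite_eq (Finset.range (2*k)) q (fun _ => (1:ℚ))]
      simp only [Finset.mem_range]
      split_ifs <;> first | rfl | omega
  rw [h1, h2]
  rw [show (if (2*k:ℕ) = 2*k then (0:ℕ) else 2*k) = 0 from if_pos rfl,
      show (if (2*k:ℕ) = 2*k then (2*k:ℕ) else 2*k+1) = 2*k from if_pos rfl]
  simp only [Finset.mem_range]
  split_ifs <;> first | omega | norm_num

lemma sumIndicatorInt (d n : ℕ) (hnd : n ≤ d) :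
    (∑ p : Fin d, (if (p:ℕ) < n then (1:ℤ) else 0)) = n := by
  rw [Fin.sum_univ_eq_sum_range (fun m => if m < n then (1:ℤ) else 0)]
  rw [Finset.sum_boole]
  norm_cast
  rw [show (Finset.range d).filter (fun m => m < n) = Finset.range n from ?_,
    Finset.card_range]
  ext m; simp only [Finset.mem_filter, Finset.mem_range]; omega

/-- if `G` contains the odd cycle `(1,2,…,2k+1)` then the lattice
point `u = (1,…,1,0,…,0,k+1)` lies in `ℚ_{≥0}A ∩ ℤ^{d+1}` but not in `ℤ_{≥0}A`. -/
theorem stmt17 (d k : ℕ) (hk : 1 ≤ k) (hd : 2 * k + 1 ≤ d)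
    (G : SimpleGraph (Fin d)) (hiso : ∀ i : Fin d, ∃ j, G.Adj i j)
    (hpath : ∀ i : ℕ, ∀ h : i + 1 ≤ 2 * k,
      G.Adj ⟨i, by omega⟩ ⟨i + 1, by omega⟩)
    (hclose : G.Adj ⟨0, by omega⟩ ⟨2 * k, by omega⟩)
    (u : Fin (d + 1) → ℤ)
    (hu : u = fun i : Fin (d + 1) => if (i : ℕ) < 2 * k + 1 then 1
      else if (i : ℕ) = d then (k : ℤ) + 1 else 0) :
    (∃ (s : Finset (Fin (d + 1) → ℤ)) (c : (Fin (d + 1) → ℤ) → ℚ),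
      ↑s ⊆ Aset d G ∧ (∀ a ∈ s, 0 ≤ c a) ∧
        ∀ i, (u i : ℚ) = ∑ a ∈ s, c a * (a i : ℚ)) ∧
    u ∉ AddSubmonoid.closure (Aset d G) := by
  have hdpos : 0 < d := by omega
  constructor
  · -- rational nonnegative combination
    set V : ℕ → Fin d := fun m => ⟨(if m = 2*k then 0 else m) % d, Nat.mod_lt _ hdpos⟩ with hVdef
    set W : ℕ → Fin d := fun m => ⟨(if m = 2*k then 2*k else m+1) % d, Nat.mod_lt _ hdpos⟩ with hWdef
    have hVv : ∀ m, m < 2*k+1 → (V m : ℕ) = if m = 2*k then 0 else m := by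
      intro m hm
      show ((if m = 2*k then 0 else m) % d) = _
      exact Nat.mod_eq_of_lt (by split <;> omega)
    have hWv : ∀ m, m < 2*k+1 → (W m : ℕ) = if m = 2*k then 2*k else m+1 := by
      intro m hm
      show ((if m = 2*k then 2*k else m+1) % d) = _
      exact Nat.mod_eq_of_lt (by split <;> omega)
    have hne : ∀ m, m < 2*k+1 → V m ≠ W m := by
      intro m hm h
      have := congrArg Fin.val h
      rw [hVv m hm, hWv m hm] at this
      split_ifs at this <;> omega
    have hadj : ∀ m, m < 2*k+1 → G.Adj (V m) (W m) := by
      intro m hm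
      by_cases h2 : m = 2*k
      · have e1 : V m = ⟨0, by omega⟩ := Fin.ext (by rw [hVv m hm, if_pos h2])
        have e2 : W m = ⟨2*k, by omega⟩ := Fin.ext (by rw [hWv m hm, if_pos h2])
        rw [e1, e2]; exact hclose
      · have hm' : m + 1 ≤ 2*k := by omega
        have e1 : V m = ⟨m, by omega⟩ := Fin.ext (by rw [hVv m hm, if_neg h2])
        have e2 : W m = ⟨m+1, by omega⟩ := Fin.ext (by rw [hWv m hm, if_neg h2])
        rw [e1, e2]; exact hpath m hm'
    set f : ℕ → (Fin (d+1) → ℤ) :=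
      fun m => Fin.snoc (Pi.single (V m) 1 + Pi.single (W m) 1) 1 with hfdef
    have hinj : ∀ m ∈ Finset.range (2*k+1), ∀ m' ∈ Finset.range (2*k+1),
        f m = f m' → m = m' := by
      intro m hm m' hm' heq
      simp only [Finset.mem_range] at hm hm'
      have hvec : (Pi.single (V m) 1 + Pi.single (W m) 1 : Fin d → ℤ)
          = Pi.single (V m') 1 + Pi.single (W m') 1 := by
        funext p
        have := congrFun heq (Fin.castSucc p)
        simpa [hfdef, Fin.snoc_castSucc] using this
      rcases pairEq (hne m hm) (hne m' hm') hvec with ⟨h1, h2⟩ | ⟨h1, h2⟩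
      · have e1 := congrArg Fin.val h1
        have e2 := congrArg Fin.val h2
        rw [hVv m hm, hVv m' hm'] at e1
        rw [hWv m hm, hWv m' hm'] at e2
        split_ifs at e1 e2 <;> omega
      · have e1 := congrArg Fin.val h1
        have e2 := congrArg Fin.val h2
        rw [hVv m hm, hWv m' hm'] at e1
        rw [hWv m hm, hVv m' hm'] at e2
        split_ifs at e1 e2 <;> omega
    have ha0 : (Fin.snoc (0 : Fin d → ℤ) (1:ℤ)) ∉ (Finset.range (2*k+1)).image f := by
      simp only [Finset.mem_image, Finset.mem_range]
      rintro ⟨m, hm, hfm⟩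
      have := congrFun hfm (Fin.castSucc (V m))
      simp [hfdef, Fin.snoc_castSucc, Pi.single_apply, (hne m hm)] at this
    refine ⟨insert (Fin.snoc (0 : Fin d → ℤ) (1:ℤ)) ((Finset.range (2*k+1)).image f),
      fun _ => 1/2, ?_, ?_, ?_⟩
    · intro a ha
      simp only [Finset.coe_insert, Set.mem_insert_iff, Finset.coe_image, Set.mem_image,
        Finset.mem_coe, Finset.mem_range] at ha
      rcases ha with rfl | ⟨m, hm, rfl⟩
      · exact Or.inl rfl
      · exact Or.inr (Or.inl ⟨V m, W m, hadj m hm, rfl⟩)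
    · intro a _; norm_num
    · intro i
      rw [Finset.sum_insert ha0, Finset.sum_image hinj]
      induction i using Fin.lastCases with
      | last =>
        rw [hu]
        simp only [Fin.val_last]
        rw [if_neg (by omega), if_pos trivial]
        have hf : ∀ m ∈ Finset.range (2*k+1),
            (1/2 : ℚ) * ((f m (Fin.last d) : ℤ) : ℚ) = 1/2 := by
          intro m _; simp [hfdef, Fin.snoc_last]
        rw [Finset.sum_congr rfl hf, Finset.sum_const, Finset.card_range]
        simp [Fin.snoc_last]
        push_cast
        ring
      | cast p =>
        rw [hu]
        simp only [Fin.coe_castSucc]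
        rw [show ((if (p:ℕ) < 2*k+1 then (1:ℤ) else if (p:ℕ) = d then (k:ℤ)+1 else 0))
            = (if (p:ℕ) < 2*k+1 then (1:ℤ) else 0) from by
          rcases Nat.lt_or_ge (p:ℕ) (2*k+1) with h | h
          · rw [if_pos h, if_pos h]
          · rw [if_neg (by omega), if_neg (by omega), if_neg (by have := p.isLt; omega)]]
        have hf : ∀ m ∈ Finset.range (2*k+1),
            (1/2 : ℚ) * ((f m (Fin.castSucc p) : ℤ) : ℚ)
            = 1/2 * ((if (p:ℕ) = (if m = 2*k then 0 else m) then (1:ℚ) else 0) +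
              (if (p:ℕ) = (if m = 2*k then 2*k else m+1) then (1:ℚ) else 0)) := by
          intro m hm
          simp only [Finset.mem_range] at hm
          have e1 : (p = V m) ↔ ((p:ℕ) = if m = 2*k then 0 else m) := by
            rw [Fin.ext_iff, hVv m hm]
          have e2 : (p = W m) ↔ ((p:ℕ) = if m = 2*k then 2*k else m+1) := by
            rw [Fin.ext_iff, hWv m hm]
          simp only [hfdef, Fin.snoc_castSucc, Pi.add_apply, Pi.single_apply]
          push_cast [apply_ite (Int.cast : ℤ → ℚ)]
          rw [if_congr e1 rfl rfl, if_congr e2 rfl rfl]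
        rw [Finset.sum_congr rfl hf, ← Finset.mul_sum, cycsum k (p:ℕ) hk]
        simp only [Fin.snoc_castSucc, Pi.zero_apply, Int.cast_zero, mul_zero, zero_add]
        split_ifs <;> norm_num
  · -- not a nonnegative integer combination
    intro hmem
    set φ : (Fin (d+1) → ℤ) →+ ℤ :=
      { toFun := fun x => 2 * x (Fin.last d) - ∑ i : Fin d, x (Fin.castSucc i)
        map_zero' := by simp
        map_add' := by
          intro x y
          simp only [Pi.add_apply]
          rw [Finset.sum_add_distrib]
          ring } with hφdef
    have hφ : ∀ x : Fin (d+1) → ℤ,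
        φ x = 2 * x (Fin.last d) - ∑ i : Fin d, x (Fin.castSucc i) := fun _ => rfl
    set M : AddSubmonoid ℤ :=
      { carrier := {n : ℤ | 0 ≤ n ∧ n ≠ 1}
        zero_mem' := by norm_num
        add_mem' := by
          rintro a b ⟨ha0, ha1⟩ ⟨hb0, hb1⟩
          exact ⟨by omega, by omega⟩ } with hMdef
    have hsingle : ∀ i : Fin d, (∑ q : Fin d, (Pi.single i 1 : Fin d → ℤ) q) = 1 := by
      intro i
      simp [Pi.single_apply]
    have hle : AddSubmonoid.closure (Aset d G) ≤ M.comap φ := by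
      rw [AddSubmonoid.closure_le]
      rintro a (rfl | ⟨i, j, hij, rfl⟩ | ⟨i, rfl⟩) <;>
        refine AddSubmonoid.mem_comap.mpr ?_
      · have : φ (Fin.snoc (0 : Fin d → ℤ) 1) = 2 := by
          rw [hφ]; simp [Fin.snoc_last, Fin.snoc_castSucc]
        rw [this]; exact ⟨by norm_num, by norm_num⟩
      · have : φ (Fin.snoc (Pi.single i 1 + Pi.single j 1 : Fin d → ℤ) 1) = 0 := by
          rw [hφ]
          simp only [Fin.snoc_last, Fin.snoc_castSucc, Pi.add_apply]
          rw [Finset.sum_add_distrib, hsingle i, hsingle j]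
          ring
        rw [this]; exact ⟨le_refl 0, by norm_num⟩
      · have : φ (Fin.snoc (-Pi.single i 1 : Fin d → ℤ) 1) = 3 := by
          rw [hφ]
          simp only [Fin.snoc_last, Fin.snoc_castSucc, Pi.neg_apply]
          rw [Finset.sum_neg_distrib, hsingle i]
          ring
        rw [this]; exact ⟨by norm_num, by norm_num⟩
      
    have h1 : φ u ∈ M := hle hmem
    have h2 : φ u = 1 := by
      rw [hφ, hu]
      simp only [Fin.val_last, Fin.coe_castSucc]
      rw [if_neg (by omega), if_pos trivial]
      have hsum : (∑ p : Fin d, (if (p:ℕ) < 2*k+1 then (1:ℤ)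
          else if (p:ℕ) = d then (k:ℤ)+1 else 0)) = ((2*k+1 : ℕ) : ℤ) := by
        rw [← sumIndicatorInt d (2*k+1) hd]
        refine Finset.sum_congr rfl fun p _ => ?_
        have hp : (p:ℕ) ≠ d := p.isLt.ne
        rcases Nat.lt_or_ge (p:ℕ) (2*k+1) with h | h
        · rw [if_pos h, if_pos h]
        · rw [if_neg (by omega), if_neg hp, if_neg (by omega)]
      rw [hsum]; push_cast; ring
    exact h1.2 h2
end

section
/- The topological interior of 2·FRAC(G) contains no lattice point (interior(2·FRAC(G)) ∩ ℤ^d = ∅), whereas the lattice point (1, 1, …, 1) belongs to the topological interior of 3·FRAC(G). Consequently, 3 is the smallest positive integer δ such that δ·FRAC(G) contains a lattice point in its interior. -/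
open Set Pointwise

lemma mem_smul_FRAC {d : ℕ} (G : SimpleGraph (Fin d)) {c : ℝ} (hc : 0 < c)
    (x : Fin d → ℝ) :
    x ∈ c • FRAC d G ↔ (∀ i, 0 ≤ x i) ∧ ∀ i j, G.Adj i j → x i + x j ≤ c := by
  constructor
  · rintro ⟨y, ⟨hy0, hye⟩, rfl⟩
    refine ⟨fun i => ?_, fun i j hij => ?_⟩
    · exact mul_nonneg hc.le (hy0 i)
    · have h := mul_le_mul_of_nonneg_left (hye i j hij) hc.le
      simpa [mul_add, Pi.smul_apply, smul_eq_mul] using h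
  · rintro ⟨h0, he⟩
    refine ⟨c⁻¹ • x, ⟨fun i => ?_, fun i j hij => ?_⟩, ?_⟩
    · exact mul_nonneg (inv_nonneg.2 hc.le) (h0 i)
    · have h := mul_le_mul_of_nonneg_left (he i j hij) (inv_nonneg.2 hc.le)
      rw [inv_mul_cancel₀ hc.ne'] at h
      simpa [mul_add, Pi.smul_apply, smul_eq_mul] using h
    · ext i
      simp [Pi.smul_apply, smul_eq_mul, ← mul_assoc, mul_inv_cancel₀ hc.ne']

lemma interior_strict {d : ℕ} (G : SimpleGraph (Fin d)) {c : ℝ} (hc : 0 < c)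
    {x : Fin d → ℝ} (hx : x ∈ interior (c • FRAC d G)) :
    (∀ i, 0 < x i) ∧ ∀ i j, G.Adj i j → x i + x j < c := by
  obtain ⟨ε, hε, hball⟩ := Metric.isOpen_iff.1 isOpen_interior x hx
  have hball' : Metric.ball x ε ⊆ c • FRAC d G := hball.trans interior_subset
  constructor
  · intro i
    have hz : Function.update x i (x i - ε / 2) ∈ Metric.ball x ε := by
      rw [Metric.mem_ball, dist_pi_lt_iff hε]
      intro j
      rcases eq_or_ne j i with rfl | hji
      · rw [Function.update_self, Real.dist_eq]
        rw [abs_lt]; constructor <;> linarith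
      · rw [Function.update_of_ne hji]
        simpa using hε
    have h := ((mem_smul_FRAC G hc _).1 (hball' hz)).1 i
    rw [Function.update_self] at h
    linarith
  · intro i j hij
    have hij' : j ≠ i := hij.ne'
    have hz : Function.update x i (x i + ε / 2) ∈ Metric.ball x ε := by
      rw [Metric.mem_ball, dist_pi_lt_iff hε]
      intro k
      rcases eq_or_ne k i with rfl | hki
      · rw [Function.update_self, Real.dist_eq]
        rw [abs_lt]; constructor <;> linarith
      · rw [Function.update_of_ne hki]
        simpa using hε
    have h := ((mem_smul_FRAC G hc _).1 (hball' hz)).2 i j hij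
    rw [Function.update_self, Function.update_of_ne hij'] at h
    linarith

lemma lattice_interior_ge_three {d : ℕ} (hd : 1 ≤ d) (G : SimpleGraph (Fin d))
    (hiso : ∀ i : Fin d, ∃ j, G.Adj i j) {c : ℝ} (hc : 0 < c)
    {x : Fin d → ℝ} (hx : x ∈ interior (c • FRAC d G))
    (hlat : ∀ i, ∃ z : ℤ, x i = (z : ℝ)) : (2 : ℝ) < c := by
  obtain ⟨h0, he⟩ := interior_strict G hc hx
  have hone : ∀ i, (1 : ℝ) ≤ x i := by
    intro i
    obtain ⟨z, hz⟩ := hlat i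
    have : (0 : ℝ) < (z : ℝ) := hz ▸ h0 i
    have : (1 : ℤ) ≤ z := by exact_mod_cast this
    rw [hz]; exact_mod_cast this
  obtain ⟨j, hj⟩ := hiso ⟨0, hd⟩
  have := he _ j hj
  have h1 := hone ⟨0, hd⟩
  have h2 := hone j
  linarith

/-- the interior of `2·FRAC(G)` contains no lattice point, the point
`(1,…,1)` is an interior lattice point of `3·FRAC(G)`, and hence `3` is the least
positive integer `δ` such that `δ·FRAC(G)` has an interior lattice point. -/
theorem stmt18 (d : ℕ) (hd : 1 ≤ d) (G : SimpleGraph (Fin d))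
    (hiso : ∀ i : Fin d, ∃ j, G.Adj i j) :
    interior ((2 : ℝ) • FRAC d G) ∩
        {x : Fin d → ℝ | ∀ i, ∃ z : ℤ, x i = (z : ℝ)} = ∅ ∧
    (fun _ : Fin d => (1 : ℝ)) ∈ interior ((3 : ℝ) • FRAC d G) ∧
    IsLeast {m : ℕ | 0 < m ∧ (interior ((m : ℝ) • FRAC d G) ∩
      {x : Fin d → ℝ | ∀ i, ∃ z : ℤ, x i = (z : ℝ)}).Nonempty} 3 := by
  have hmem3 : (fun _ : Fin d => (1 : ℝ)) ∈ interior ((3 : ℝ) • FRAC d G) := by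
    rw [mem_interior]
    refine ⟨Metric.ball (fun _ : Fin d => (1 : ℝ)) (1 / 2), ?_, Metric.isOpen_ball,
      Metric.mem_ball_self (by norm_num)⟩
    intro x hx
    rw [Metric.mem_ball] at hx
    have hco : ∀ i, |x i - 1| < 1 / 2 := by
      intro i
      have := (dist_le_pi_dist x (fun _ : Fin d => (1 : ℝ)) i).trans_lt hx
      simpa [Real.dist_eq] using this
    rw [mem_smul_FRAC G (by norm_num : (0:ℝ) < 3)]
    refine ⟨fun i => ?_, fun i j _ => ?_⟩
    · have := abs_lt.1 (hco i); linarith [(this).1]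
    · have h1 := (abs_lt.1 (hco i)).2
      have h2 := (abs_lt.1 (hco j)).2
      linarith
  refine ⟨?_, hmem3, ⟨⟨by norm_num, ⟨fun _ => (1 : ℝ), hmem3, fun i => ⟨1, by norm_num⟩⟩⟩, ?_⟩⟩
  · ext x
    simp only [Set.mem_inter_iff, Set.mem_setOf_eq, Set.mem_empty_iff_false, iff_false]
    rintro ⟨hx, hlat⟩
    have := lattice_interior_ge_three hd G hiso (by norm_num : (0:ℝ) < 2) hx hlat
    linarith
  · rintro m ⟨hm, x, hx, hlat⟩
    have h2 : (2 : ℝ) < (m : ℝ) :=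
      lattice_interior_ge_three hd G hiso (by exact_mod_cast hm) hx hlat
    exact_mod_cast h2
end
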